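/- Let m ≥ 2, i be an integer with 1 ≤ i ≤ m, and n be sufficiently large so that the sequence is defined with nonnegative terms (n ≥ 2m−i+2 suffices). Then the sequence π = ((n−1)^i, (2m−i)^{m−i+1}, (m+1)^{m−i}, i^{n−2m+i−1}), consisting of i terms equal to n−1, m−i+1 terms equal to 2m−i, m−i terms equal to m+1, and n−2m+i−1 terms equal to i, is graphic, satisfies d_{2m+2−j} ≥ j for every 1 ≤ j ≤ m, but is not potentially ₃C_{2m+1}-graphic; in particular no realization of π contains cycles of every length r with 3 ≤ r ≤ 2m+1. -/

import Mathlib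

/-- `G` contains a cycle of length `r`. -/
def hasCycleOfLength {V : Type*} (G : SimpleGraph V) (r : ℕ) : Prop :=
  ∃ (v : V) (c : G.Walk v v), c.IsCycle ∧ c.length = r

/-- `G` is a realization of the sequence `d`, i.e. `d` is its degree sequence. -/
def IsDegreeSeq {n : ℕ} (G : SimpleGraph (Fin n)) (d : Fin n → ℕ) : Prop :=
  ∀ i, (G.neighborSet i).ncard = d i

/-- The sequence `d` is graphic: it is the degree sequence of a simple graph. -/
def Graphic {n : ℕ} (d : Fin n → ℕ) : Prop :=
  ∃ G : SimpleGraph (Fin n), IsDegreeSeq G d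

/-- `d` is potentially ₃Cℓ-graphic: some realization contains cycles of every
length `r` with `3 ≤ r ≤ ℓ`. -/
def Pot3C {n : ℕ} (ℓ : ℕ) (d : Fin n → ℕ) : Prop :=
  ∃ G : SimpleGraph (Fin n), IsDegreeSeq G d ∧ ∀ r, 3 ≤ r → r ≤ ℓ → hasCycleOfLength G r

/-- `d` is potentially Cℓ-graphic: some realization contains a cycle of length `ℓ`. -/
def PotC {n : ℕ} (ℓ : ℕ) (d : Fin n → ℕ) : Prop :=
  ∃ G : SimpleGraph (Fin n), IsDegreeSeq G d ∧ hasCycleOfLength G ℓ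

/-- `d` has a realization `G` containing cycles `C₃, …, C_ℓ` on those vertices with
degrees `d 0, …, d (ℓ-1)`: the induced subgraph on some vertex set `S`, whose multiset
of degrees is that of the first `ℓ` terms of `d`, contains cycles of all lengths
from `3` to `ℓ`. -/
def RealizationWithCyclesOn {n : ℕ} (ℓ : ℕ) (d : Fin n → ℕ) : Prop :=
  ∃ (G : SimpleGraph (Fin n)) (S : Finset (Fin n)),
    IsDegreeSeq G d ∧ S.card = ℓ ∧
    S.val.map d = (Finset.univ.filter (fun i : Fin n => (i : ℕ) < ℓ)).val.map d ∧
    ∀ r, 3 ≤ r → r ≤ ℓ → hasCycleOfLength (G.induce (S : Set (Fin n))) r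

/-- The sequence `((n-1)^i, (2m-i)^{m-i+1}, (m+1)^{m-i}, i^{n-2m+i-1})`. -/
def seqOdd (m i n : ℕ) : Fin n → ℕ := fun j =>
  if (j : ℕ) < i then n - 1
  else if (j : ℕ) < m + 1 then 2 * m - i
  else if (j : ℕ) < 2 * m - i + 1 then m + 1
  else i


lemma cardFilterLt (n k : ℕ) (h : k ≤ n) :
    (Finset.univ.filter fun v : Fin n => (v : ℕ) < k).card = k := by
  classical
  rw [← Fintype.card_fin k, ← Finset.card_univ]
  exact Finset.card_bij' (fun v hv => (⟨(v : ℕ), by simpa using hv⟩ : Fin k))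
    (fun w _ => (⟨(w : ℕ), lt_of_lt_of_le w.isLt h⟩ : Fin n))
    (fun a ha => Finset.mem_univ _)
    (fun a ha => by simp [a.isLt])
    (fun a ha => by simp) (fun a ha => by simp)

def myG (m i n : ℕ) : SimpleGraph (Fin n) where
  Adj u v := u ≠ v ∧ ((u : ℕ) < i ∨ (v : ℕ) < i ∨
    ((u : ℕ) ≤ 2 * m - i ∧ (v : ℕ) ≤ 2 * m - i ∧ ((u : ℕ) ≤ m ∨ (v : ℕ) ≤ m)))
  symm := by constructor; intro u v ⟨h1, h2⟩; exact ⟨h1.symm, by tauto⟩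
  loopless := by constructor; intro u ⟨h1, _⟩; exact h1 rfl

lemma myG_deg (m i n : ℕ) (hm : 2 ≤ m) (hi1 : 1 ≤ i) (hi2 : i ≤ m)
    (hn : 2 * m - i + 2 ≤ n) (u : Fin n) :
    ((myG m i n).neighborSet u).ncard = seqOdd m i n u := by
  classical
  have hset : (myG m i n).neighborSet u
      = ((Finset.univ.filter fun v => (myG m i n).Adj u v : Finset (Fin n)) : Set (Fin n)) := by
    ext v; simp [SimpleGraph.mem_neighborSet]
  rw [hset, Set.ncard_coe_finset]
  rcases lt_or_ge (u : ℕ) i with hu | hu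
  · -- universal
    have : (Finset.univ.filter fun v => (myG m i n).Adj u v) = Finset.univ.erase u := by
      ext v
      simp only [Finset.mem_filter, Finset.mem_univ, true_and, Finset.mem_erase, and_true,
        myG, ne_eq, Fin.ext_iff]
      omega
    rw [this, Finset.card_erase_of_mem (Finset.mem_univ _), Finset.card_univ, Fintype.card_fin]
    simp only [seqOdd, if_pos hu]
  rcases lt_or_ge (u : ℕ) (m + 1) with hu2 | hu2
  · -- class A : degree 2m - i
    have : (Finset.univ.filter fun v => (myG m i n).Adj u v)
        = (Finset.univ.filter fun v : Fin n => (v : ℕ) < 2 * m - i + 1).erase u := by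
      ext v
      simp only [Finset.mem_filter, Finset.mem_univ, true_and, Finset.mem_erase,
        myG, ne_eq, Fin.ext_iff]
      omega
    rw [this, Finset.card_erase_of_mem (by simp; omega), cardFilterLt n _ (by omega)]
    simp only [seqOdd]
    rw [if_neg (by omega), if_pos hu2]
    omega
  rcases lt_or_ge (u : ℕ) (2 * m - i + 1) with hu3 | hu3
  · -- class B : degree m + 1
    have : (Finset.univ.filter fun v => (myG m i n).Adj u v)
        = Finset.univ.filter fun v : Fin n => (v : ℕ) < m + 1 := by
      ext v
      simp only [Finset.mem_filter, Finset.mem_univ, true_and, myG, ne_eq, Fin.ext_iff]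
      omega
    rw [this, cardFilterLt n _ (by omega)]
    simp only [seqOdd]
    rw [if_neg (by omega), if_neg (by omega), if_pos hu3]
  · -- low : degree i
    have : (Finset.univ.filter fun v => (myG m i n).Adj u v)
        = Finset.univ.filter fun v : Fin n => (v : ℕ) < i := by
      ext v
      simp only [Finset.mem_filter, Finset.mem_univ, true_and, myG, ne_eq, Fin.ext_iff]
      omega
    rw [this, cardFilterLt n _ (by omega)]
    simp only [seqOdd]
    rw [if_neg (by omega), if_neg (by omega), if_neg (by omega)]


lemma mem_tail_of_mem_support' {V : Type*} {G : SimpleGraph V} {v : V} (c : G.Walk v v)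
    (hne : c.support.tail ≠ []) {x : V} (hx : x ∈ c.support) : x ∈ c.support.tail := by
  have hsup : c.support = v :: c.support.tail := c.support_eq_cons
  rcases List.mem_cons.mp (hsup ▸ hx) with h | h
  · rw [h]
    have hgl : c.support.tail.getLast hne = v := by
      rw [List.getLast_tail]; exact c.getLast_support
    have hm := List.getLast_mem hne
    rwa [hgl] at hm
  · exact h

section NoCycle

variable {m i n : ℕ} {G : SimpleGraph (Fin n)}

lemma univ_adj (hm : 2 ≤ m) (hi1 : 1 ≤ i) (hi2 : i ≤ m) (hn : 2 * m - i + 2 ≤ n)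
    (hG : ∀ j, (G.neighborSet j).ncard = seqOdd m i n j)
    (u : Fin n) (hu : (u : ℕ) < i) (v : Fin n) (hv : v ≠ u) : G.Adj u v := by
  have hdeg : (G.neighborSet u).ncard = n - 1 := by
    rw [hG u]; simp only [seqOdd, if_pos hu]
  have hsub : G.neighborSet u ⊆ {u}ᶜ := fun x hx => hx.ne'
  have hcompl : ({u}ᶜ : Set (Fin n)).ncard = n - 1 := by
    rw [Set.compl_eq_univ_diff, Set.ncard_diff (Set.subset_univ _), Set.ncard_univ,
      Set.ncard_singleton, Nat.card_eq_fintype_card, Fintype.card_fin]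
  have heq := Set.eq_of_subset_of_ncard_le hsub (by rw [hdeg, hcompl]) (Set.toFinite _)
  have : v ∈ G.neighborSet u := by rw [heq]; exact hv
  exact this

lemma low_nbhd (hm : 2 ≤ m) (hi1 : 1 ≤ i) (hi2 : i ≤ m) (hn : 2 * m - i + 2 ≤ n)
    (hG : ∀ j, (G.neighborSet j).ncard = seqOdd m i n j)
    (x : Fin n) (hx : 2 * m - i + 1 ≤ (x : ℕ)) :
    G.neighborSet x = {v : Fin n | (v : ℕ) < i} := by
  classical
  have hdeg : (G.neighborSet x).ncard = i := by
    rw [hG x]; simp only [seqOdd]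
    rw [if_neg (by omega), if_neg (by omega), if_neg (by omega)]
  have hsub : {v : Fin n | (v : ℕ) < i} ⊆ G.neighborSet x := by
    intro v hv
    have hvx : x ≠ v := by
      intro h; rw [h] at hx; simp only [Set.mem_setOf_eq] at hv; omega
    exact (univ_adj hm hi1 hi2 hn hG v hv x hvx).symm
  have hUcard : ({v : Fin n | (v : ℕ) < i}).ncard = i := by
    have hs : {v : Fin n | (v : ℕ) < i}
        = ((Finset.univ.filter fun v : Fin n => (v : ℕ) < i : Finset (Fin n)) : Set (Fin n)) := by
      ext v; simp
    rw [hs, Set.ncard_coe_finset, cardFilterLt n i (by omega)]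
  exact (Set.eq_of_subset_of_ncard_le hsub (by rw [hdeg, hUcard]) (Set.toFinite _)).symm

end NoCycle

open SimpleGraph in
lemma no_cycle_odd {m i n : ℕ} {G : SimpleGraph (Fin n)}
    (hm : 2 ≤ m) (hi1 : 1 ≤ i) (hi2 : i ≤ m) (hn : 2 * m - i + 2 ≤ n)
    (hG : ∀ j, (G.neighborSet j).ncard = seqOdd m i n j)
    (v : Fin n) (c : G.Walk v v) (hc : c.IsCycle) : c.length ≠ 2 * m + 1 := by
  classical
  intro hlen
  -- basic list facts
  have htail_nodup : c.support.tail.Nodup := hc.support_nodup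
  have htail_len : c.support.tail.length = 2 * m + 1 := by
    rw [List.length_tail, c.length_support, hlen]
    omega
  have htail_ne : c.support.tail ≠ [] := by
    apply List.ne_nil_of_length_pos; omega
  have hmem_tail : ∀ x ∈ c.support, x ∈ c.support.tail :=
    fun x hx => mem_tail_of_mem_support' c htail_ne hx
  have htail_sub : ∀ x ∈ c.support.tail, x ∈ c.support := by
    intro x hx
    rw [c.support_eq_cons]; exact List.mem_cons_of_mem _ hx
  have hgl : c.support.tail.getLast htail_ne = v := by
    rw [List.getLast_tail]; exact c.getLast_support
  -- darts : injectivity of snd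
  have hsnd_nodup : (c.darts.map fun d => d.snd).Nodup := by
    rw [SimpleGraph.Walk.map_snd_darts]; exact htail_nodup
  have hsnd_inj := List.inj_on_of_nodup_map hsnd_nodup
  -- the reversed support tail is nodup
  have htrev_ne : c.support.tail.reverse ≠ [] := by
    intro h; exact htail_ne (by simpa using h)
  have hrev_tail_eq : c.reverse.support.tail = c.support.tail.reverse.tail ++ [v] := by
    conv_lhs => rw [SimpleGraph.Walk.support_reverse, c.support_eq_cons]
    rw [List.reverse_cons, List.tail_append_of_ne_nil htrev_ne]
  have hhead_trev : c.support.tail.reverse.head htrev_ne = v := by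
    rw [List.head_reverse]; exact hgl
  have htrev_cons : c.support.tail.reverse = v :: c.support.tail.reverse.tail := by
    conv_lhs => rw [← List.cons_head_tail htrev_ne]
    rw [hhead_trev]
  have htrev_nodup : c.support.tail.reverse.Nodup := List.nodup_reverse.mpr htail_nodup
  have hv_trev : v ∉ c.support.tail.reverse.tail ∧ c.support.tail.reverse.tail.Nodup := by
    rw [htrev_cons] at htrev_nodup
    exact List.nodup_cons.mp htrev_nodup
  have hrev_tail_nodup : c.reverse.support.tail.Nodup := by
    rw [hrev_tail_eq]
    refine List.Nodup.append hv_trev.2 (List.nodup_singleton v) ?_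
    intro a ha hav
    rw [List.mem_singleton] at hav
    exact hv_trev.1 (hav ▸ ha)
  have hrev_snd_nodup : (c.reverse.darts.map fun d => d.snd).Nodup := by
    rw [SimpleGraph.Walk.map_snd_darts]; exact hrev_tail_nodup
  have hrev_snd_inj := List.inj_on_of_nodup_map hrev_snd_nodup
  have hsymm_mem : ∀ d : G.Dart, d ∈ c.darts → d.symm ∈ c.reverse.darts := by
    intro d hd
    rw [SimpleGraph.Walk.darts_reverse, List.mem_reverse, List.mem_map]
    exact ⟨d, hd, rfl⟩
  have hfst_inj : ∀ d₁ ∈ c.darts, ∀ d₂ ∈ c.darts, d₁.fst = d₂.fst → d₁ = d₂ := by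
    intro d₁ h₁ d₂ h₂ hf
    have heq := hrev_snd_inj (hsymm_mem d₁ h₁) (hsymm_mem d₂ h₂)
      (by show d₁.symm.snd = d₂.symm.snd; simpa using hf)
    have h2 := congrArg SimpleGraph.Dart.symm heq
    simpa using h2
  -- fst and snd surject onto the support
  have hsnd_surj : ∀ x ∈ c.support, ∃ d ∈ c.darts, d.snd = x := by
    intro x hx
    have hx' := hmem_tail x hx
    rw [← SimpleGraph.Walk.map_snd_darts] at hx'
    simpa using hx'
  have hrev_darts_mem : ∀ d : G.Dart, d ∈ c.reverse.darts → d.symm ∈ c.darts := by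
    intro d hd
    rw [SimpleGraph.Walk.darts_reverse, List.mem_reverse, List.mem_map] at hd
    obtain ⟨e, he, hed⟩ := hd
    have : d.symm = e := by rw [← hed]; simp
    rwa [this]
  have hrev_tail_ne : c.reverse.support.tail ≠ [] := by
    rw [hrev_tail_eq]; simp
  have hfst_surj : ∀ x ∈ c.support, ∃ d ∈ c.darts, d.fst = x := by
    intro x hx
    have hx' : x ∈ c.reverse.support := by
      rw [SimpleGraph.Walk.support_reverse, List.mem_reverse]; exact hx
    have hx'' := mem_tail_of_mem_support' c.reverse hrev_tail_ne hx'
    rw [← SimpleGraph.Walk.map_snd_darts] at hx''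
    obtain ⟨d, hd, hdx⟩ := List.mem_map.mp hx''
    exact ⟨d.symm, hrev_darts_mem d hd, hdx⟩
  -- Finsets
  set Sfin : Finset (Fin n) := c.support.tail.toFinset with hSfin
  set Dfin : Finset G.Dart := c.darts.toFinset with hDfin
  have hScard : Sfin.card = 2 * m + 1 := by
    rw [hSfin, List.toFinset_card_of_nodup htail_nodup, htail_len]
  -- degree facts
  have hlow_fst : ∀ d : G.Dart, d ∈ c.darts → 2 * m - i + 1 ≤ (d.fst : ℕ) → (d.snd : ℕ) < i := by
    intro d hd hdl
    have := d.adj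
    have hmem : d.snd ∈ G.neighborSet d.fst := this
    rw [low_nbhd hm hi1 hi2 hn hG d.fst hdl] at hmem
    exact hmem
  have hlow_snd : ∀ d : G.Dart, d ∈ c.darts → 2 * m - i + 1 ≤ (d.snd : ℕ) → (d.fst : ℕ) < i := by
    intro d hd hdl
    have hmem : d.fst ∈ G.neighborSet d.snd := d.adj.symm
    rw [low_nbhd hm hi1 hi2 hn hG d.snd hdl] at hmem
    exact hmem
  -- images of darts under fst/snd are the support
  have himg_snd : Dfin.image (fun d => d.snd) = Sfin := by
    ext x
    simp only [Finset.mem_image, hDfin, hSfin, List.mem_toFinset]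
    constructor
    · rintro ⟨d, hd, rfl⟩
      rw [← SimpleGraph.Walk.map_snd_darts]
      exact List.mem_map_of_mem hd
    · intro hx
      obtain ⟨d, hd, hdx⟩ := hsnd_surj x (htail_sub x hx)
      exact ⟨d, hd, hdx⟩
  have himg_fst : Dfin.image (fun d => d.fst) = Sfin := by
    ext x
    simp only [Finset.mem_image, hDfin, hSfin, List.mem_toFinset]
    constructor
    · rintro ⟨d, hd, rfl⟩
      exact hmem_tail _ (SimpleGraph.Walk.dart_fst_mem_support_of_mem_darts c hd)
    · intro hx
      obtain ⟨d, hd, hdx⟩ := hfst_surj x (htail_sub x hx)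
      exact ⟨d, hd, hdx⟩
  -- counting
  set Ufin : Finset (Fin n) := Finset.univ.filter (fun x : Fin n => (x : ℕ) < i) with hUfin
  have hUcard : Ufin.card = i := cardFilterLt n i (by omega)
  have hsnd_injOn : Set.InjOn (fun d : G.Dart => d.snd) ↑Dfin := by
    intro a ha b hb hab
    simp only [hDfin, Finset.coe_insert, Finset.mem_coe, List.mem_toFinset] at ha hb
    exact hsnd_inj ha hb hab
  have hfst_injOn : Set.InjOn (fun d : G.Dart => d.fst) ↑Dfin := by
    intro a ha b hb hab
    simp only [hDfin, Finset.coe_insert, Finset.mem_coe, List.mem_toFinset] at ha hb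
    exact hfst_inj a ha b hb hab
  set SL := Sfin.filter (fun x : Fin n => 2 * m - i + 1 ≤ (x : ℕ)) with hSL
  set SN := Sfin.filter (fun x : Fin n => ¬ (2 * m - i + 1 ≤ (x : ℕ))) with hSN
  set TLsnd := Dfin.filter (fun d : G.Dart => 2 * m - i + 1 ≤ ((d.snd : Fin n) : ℕ)) with hTLsnd
  set TLfst := Dfin.filter (fun d : G.Dart => 2 * m - i + 1 ≤ ((d.fst : Fin n) : ℕ)) with hTLfst
  set TUsnd := Dfin.filter (fun d : G.Dart => ((d.snd : Fin n) : ℕ) < i) with hTUsnd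
  have haSL : SL = TLsnd.image (fun d => d.snd) := by
    rw [hSL, ← himg_snd, Finset.filter_image]
  have haSLf : SL = TLfst.image (fun d => d.fst) := by
    rw [hSL, ← himg_fst, Finset.filter_image]
  have hSLcard : SL.card = TLsnd.card := by
    rw [haSL]
    exact Finset.card_image_of_injOn (hsnd_injOn.mono (by
      intro d hd; exact Finset.mem_coe.mpr (Finset.filter_subset _ _ (Finset.mem_coe.mp hd))))
  have hSLcardf : SL.card = TLfst.card := by
    rw [haSLf]
    exact Finset.card_image_of_injOn (hfst_injOn.mono (by
      intro d hd; exact Finset.mem_coe.mpr (Finset.filter_subset _ _ (Finset.mem_coe.mp hd))))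
  have hTLsnd_le : TLsnd.card ≤ i := by
    have himg : TLsnd.image (fun d => d.fst) ⊆ Ufin := by
      intro x hx
      obtain ⟨d, hd, rfl⟩ := Finset.mem_image.mp hx
      have hd2 := Finset.mem_filter.mp hd
      have hdarts : d ∈ c.darts := List.mem_toFinset.mp hd2.1
      rw [hUfin]
      simp only [Finset.mem_filter, Finset.mem_univ, true_and]
      exact hlow_snd d hdarts hd2.2
    calc TLsnd.card = (TLsnd.image (fun d => d.fst)).card := by
          rw [Finset.card_image_of_injOn (hfst_injOn.mono (by
            intro d hd; exact Finset.mem_coe.mpr (Finset.filter_subset _ _ (Finset.mem_coe.mp hd))))]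
      _ ≤ Ufin.card := Finset.card_le_card himg
      _ = i := hUcard
  set NLfin : Finset (Fin n) := Finset.univ.filter (fun x : Fin n => (x : ℕ) < 2 * m - i + 1)
    with hNLfin
  have hNLcard : NLfin.card = 2 * m - i + 1 := cardFilterLt n _ (by omega)
  have hSN_sub : SN ⊆ NLfin := by
    intro x hx
    have := (Finset.mem_filter.mp hx).2
    rw [hNLfin]; simp only [Finset.mem_filter, Finset.mem_univ, true_and]; omega
  have hSN_le : SN.card ≤ 2 * m - i + 1 := hNLcard ▸ Finset.card_le_card hSN_sub
  have hsplit : SL.card + SN.card = Sfin.card :=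
    Finset.card_filter_add_card_filter_not _
  have hSLi : SL.card = i ∧ SN.card = 2 * m - i + 1 := by
    have h1 : SL.card ≤ i := hSLcard ▸ hTLsnd_le
    omega
  have hSNeq : SN = NLfin :=
    Finset.eq_of_subset_of_card_le hSN_sub (by omega)
  have hnonlow_mem : ∀ x : Fin n, (x : ℕ) < 2 * m - i + 1 → x ∈ c.support.tail := by
    intro x hx
    have : x ∈ NLfin := by
      rw [hNLfin]; simp only [Finset.mem_filter, Finset.mem_univ, true_and]; exact hx
    rw [← hSNeq] at this
    have := Finset.mem_of_mem_filter x this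
    rwa [hSfin, List.mem_toFinset] at this
  have hTUsnd_le : TUsnd.card ≤ i := by
    have himg : TUsnd.image (fun d => d.snd) ⊆ Ufin := by
      intro x hx
      obtain ⟨d, hd, rfl⟩ := Finset.mem_image.mp hx
      have hd2 := Finset.mem_filter.mp hd
      rw [hUfin]
      simp only [Finset.mem_filter, Finset.mem_univ, true_and]
      exact hd2.2
    calc TUsnd.card = (TUsnd.image (fun d => d.snd)).card := by
          rw [Finset.card_image_of_injOn (hsnd_injOn.mono (by
            intro d hd; exact Finset.mem_coe.mpr (Finset.filter_subset _ _ (Finset.mem_coe.mp hd))))]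
      _ ≤ Ufin.card := Finset.card_le_card himg
      _ = i := hUcard
  have hTsub : TLfst ⊆ TUsnd := by
    intro d hd
    have hd2 := Finset.mem_filter.mp hd
    have hdarts : d ∈ c.darts := List.mem_toFinset.mp hd2.1
    exact Finset.mem_filter.mpr ⟨hd2.1, hlow_fst d hdarts hd2.2⟩
  have hTeq : TLfst = TUsnd :=
    Finset.eq_of_subset_of_card_le hTsub (by omega)
  have K1 : ∀ d ∈ c.darts, ((d.snd : Fin n) : ℕ) < i → 2 * m - i + 1 ≤ ((d.fst : Fin n) : ℕ) := by
    intro d hd hdu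
    have : d ∈ TUsnd := Finset.mem_filter.mpr ⟨List.mem_toFinset.mpr hd, hdu⟩
    rw [← hTeq] at this
    exact (Finset.mem_filter.mp this).2
  -- the boundary dart contradiction
  have hiw : i < n := by omega
  have h0n : 0 < n := by omega
  have hw : (⟨i, hiw⟩ : Fin n) ∈ c.support :=
    htail_sub _ (hnonlow_mem ⟨i, hiw⟩ (by show i < 2 * m - i + 1; omega))
  have hu0 : (⟨0, h0n⟩ : Fin n) ∈ c.support :=
    htail_sub _ (hnonlow_mem ⟨0, h0n⟩ (by show (0:ℕ) < 2 * m - i + 1; omega))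
  set c' := c.rotate _ hw with hc'
  have hu0' : (⟨0, h0n⟩ : Fin n) ∈ c'.support := by
    have h1 : (⟨0, h0n⟩ : Fin n) ∈ c'.support.tail :=
      (SimpleGraph.Walk.support_rotate c _ hw).mem_iff.mpr (hmem_tail _ hu0)
    rw [c'.support_eq_cons]
    exact List.mem_cons_of_mem _ h1
  obtain ⟨d, hd, hdf, hds⟩ := (c'.takeUntil _ hu0').exists_boundary_dart
    {x : Fin n | i ≤ (x : ℕ) ∧ (x : ℕ) ≤ 2 * m - i}
    (by simp only [Set.mem_setOf_eq]; exact ⟨le_rfl, show i ≤ 2 * m - i by omega⟩)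
    (by simp only [Set.mem_setOf_eq]; intro hLS; have h00 : i ≤ 0 := hLS.1; omega)
  have hd' : d ∈ c.darts :=
    (SimpleGraph.Walk.rotate_darts c _ hw).mem_iff.mp ((c'.darts_takeUntil_subset hu0') hd)
  simp only [Set.mem_setOf_eq] at hdf hds
  push_neg at hds
  rcases lt_or_ge ((d.snd : Fin n) : ℕ) i with h | h
  · have := K1 d hd' h; omega
  · have hlow : 2 * m - i + 1 ≤ ((d.snd : Fin n) : ℕ) := by
      have := hds h; omega
    have := hlow_snd d hd' hlow
    omega

/-- **Sharpness, odd case.** For `m ≥ 2`, `1 ≤ i ≤ m` and `n ≥ 2m-i+2`, the sequence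
`((n-1)^i, (2m-i)^{m-i+1}, (m+1)^{m-i}, i^{n-2m+i-1})` is graphic and satisfies
`d_{2m+2-j} ≥ j` for every `1 ≤ j ≤ m` (whenever this term exists), but it is not
potentially ₃C_{2m+1}-graphic. -/
theorem not_pot3C_odd (m i n : ℕ) (hm : 2 ≤ m) (hi1 : 1 ≤ i) (hi2 : i ≤ m)
    (hn : 2 * m - i + 2 ≤ n) :
    Graphic (seqOdd m i n) ∧
    (∀ j : ℕ, ∀ _ : 1 ≤ j, ∀ _ : j ≤ m, ∀ h : 2 * m + 1 - j < n,
      j ≤ seqOdd m i n ⟨2 * m + 1 - j, h⟩) ∧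
    ¬ Pot3C (2 * m + 1) (seqOdd m i n) := by
  refine ⟨⟨myG m i n, fun u => myG_deg m i n hm hi1 hi2 hn u⟩, ?_, ?_⟩
  · intro j hj1 hj2 h
    simp only [seqOdd]
    split_ifs with h1 h2 h3 <;> omega
  · rintro ⟨G, hG, hcyc⟩
    obtain ⟨v, c, hcyc', hlen⟩ := hcyc (2 * m + 1) (by omega) le_rfl
    exact no_cycle_odd hm hi1 hi2 hn hG v c hcyc' hlen
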